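/- Let f : ℝⁿ → ℝ be twice continuously differentiable with Hessian Lipschitz continuous with constant L (in operator norm). Let x, v ∈ ℝⁿ, let y¹, …, yᵖ ∈ ℝⁿ, and set Δ_y = max_{1 ≤ ℓ ≤ p} ‖yˡ − x‖, assumed positive. Define the scaled constraint map Φ̂ from symmetric n×n matrices A to ℝᵖ × ℝⁿ by Φ̂(A) = ( ( (1/(2Δ_y²)) (yˡ − x)ᵀ A (yˡ − x) )_{ℓ=1,…,p} , A v ), and suppose there is a constant K ≥ 0 such that ‖A‖_F ≤ K ‖Φ̂(A)‖ for every symmetric n×n matrix A, where the norm on ℝᵖ × ℝⁿ is the Euclidean norm. If the symmetric matrix H satisfies the enriched interpolating conditions f(x) + ∇f(x)ᵀ(yˡ − x) + ½ (yˡ − x)ᵀ H (yˡ − x) = f(yˡ) for ℓ = 1, …, p, together with H v = ∇²f(x) v, then ‖H − ∇²f(x)‖_F ≤ K · √p · (L/6) · Δ_y. -/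

import Mathlib

open scoped Matrix RealInnerProductSpace
set_option synthInstance.maxHeartbeats 1000000
set_option maxHeartbeats 1000000

lemma taylor2 {n : ℕ} (f : EuclideanSpace ℝ (Fin n) → ℝ)
    (g : EuclideanSpace ℝ (Fin n) → EuclideanSpace ℝ (Fin n))
    (hessM : EuclideanSpace ℝ (Fin n) → Matrix (Fin n) (Fin n) ℝ)
    (L : ℝ)
    (hg : ∀ u, HasGradientAt f (g u) u)
    (hhess : ∀ u, HasFDerivAt g (Matrix.toEuclideanCLM (𝕜 := ℝ) (hessM u)) u)
    (hLip : ∀ u v, ‖Matrix.toEuclideanCLM (𝕜 := ℝ) (hessM u) -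
      Matrix.toEuclideanCLM (𝕜 := ℝ) (hessM v)‖ ≤ L * ‖u - v‖)
    (x d : EuclideanSpace ℝ (Fin n)) :
    |f (x + d) - f x - ⟪g x, d⟫ -
      (1/2) * ⟪Matrix.toEuclideanCLM (𝕜 := ℝ) (hessM x) d, d⟫| ≤ L / 6 * ‖d‖ ^ 3 := by
  set M : Matrix (Fin n) (Fin n) ℝ → (EuclideanSpace ℝ (Fin n) →L[ℝ] EuclideanSpace ℝ (Fin n)) := fun A => Matrix.toEuclideanCLM (𝕜 := ℝ) A with hM
  set γ : ℝ → EuclideanSpace ℝ (Fin n) := fun t => x + t • d with hγ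
  have hγd : ∀ t : ℝ, HasDerivAt γ d t := by
    intro t
    have := ((hasDerivAt_id t).smul_const d).const_add x
    simp only [one_smul] at this
    exact this
  have hγ0 : γ 0 = x := by simp [hγ]
  -- Step 1 : ‖g (γ t) - g x - t • M x d‖ ≤ L/2 * ‖d‖^2 * t^2 on [0,1]
  set F : ℝ → EuclideanSpace ℝ (Fin n) := fun t => g (γ t) - g x - t • (M (hessM x) d) with hF
  have hF' : ∀ t : ℝ, HasDerivAt F (M (hessM (γ t)) d - M (hessM x) d) t := by
    intro t
    have h1 : HasDerivAt (fun t => g (γ t)) (M (hessM (γ t)) d) t :=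
      (hhess (γ t)).comp_hasDerivAt t (hγd t)
    have := (h1.sub_const (g x)).sub ((hasDerivAt_id t).smul_const (M (hessM x) d))
    simp only [one_smul] at this
    exact this
  have step1 : ∀ t ∈ Set.Icc (0:ℝ) 1, ‖F t‖ ≤ L / 2 * ‖d‖ ^ 2 * t ^ 2 := by
    have := image_norm_le_of_norm_deriv_right_le_deriv_boundary
      (f := F) (f' := fun t => M (hessM (γ t)) d - M (hessM x) d)
      (a := 0) (b := 1)
      (B := fun t => L / 2 * ‖d‖ ^ 2 * t ^ 2) (B' := fun t => L * ‖d‖ ^ 2 * t)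
      (fun t _ => (hF' t).continuousAt.continuousWithinAt)
      (fun t _ => (hF' t).hasDerivWithinAt.mono (Set.Ici_subset_Ici.2 le_rfl))
      (by simp [hF, hγ0])
      (fun t => by
        have : HasDerivAt (fun t : ℝ => L / 2 * ‖d‖ ^ 2 * t ^ 2) (L / 2 * ‖d‖^2 * (2 * t)) t := by
          simpa using (hasDerivAt_pow 2 t).const_mul (L / 2 * ‖d‖ ^ 2)
        convert this using 1; ring)
      ?_
    · exact this
    · intro t ht
      have h1 : ‖M (hessM (γ t)) d - M (hessM x) d‖ ≤ ‖M (hessM (γ t)) - M (hessM x)‖ * ‖d‖ := by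
        simpa [ContinuousLinearMap.sub_apply] using
          (M (hessM (γ t)) - M (hessM x)).le_opNorm d
      have h2 : ‖M (hessM (γ t)) - M (hessM x)‖ ≤ L * (t * ‖d‖) := by
        have h := hLip (γ t) x
        have hsub : γ t - x = t • d := by simp [hγ]
        rw [hsub, norm_smul, Real.norm_eq_abs, abs_of_nonneg ht.1] at h
        exact h.trans_eq (by ring)
      calc ‖M (hessM (γ t)) d - M (hessM x) d‖ ≤ L * (t * ‖d‖) * ‖d‖ :=
            h1.trans (by
              have : (0:ℝ) ≤ ‖d‖ := norm_nonneg d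
              exact mul_le_mul_of_nonneg_right h2 this)
        _ = L * ‖d‖ ^ 2 * t := by ring
  -- Step 2
  set ψ : ℝ → ℝ := fun t => f (γ t) - f x - t * ⟪g x, d⟫ - t ^ 2 / 2 * ⟪M (hessM x) d, d⟫ with hψ
  have hψ' : ∀ t : ℝ, HasDerivAt ψ (⟪F t, d⟫) t := by
    intro t
    have h1 : HasDerivAt (fun t => f (γ t)) ⟪g (γ t), d⟫ t := by
      have := ((hg (γ t)).hasFDerivAt).comp_hasDerivAt t (hγd t)
      simp only [InnerProductSpace.toDual_apply_apply] at this
      exact this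
    have h2 : HasDerivAt (fun t : ℝ => t ^ 2 / 2 * ⟪M (hessM x) d, d⟫)
        (t * ⟪M (hessM x) d, d⟫) t := by
      have := ((hasDerivAt_pow 2 t).div_const 2).mul_const (⟪M (hessM x) d, d⟫)
      refine this.congr_deriv ?_
      norm_num
    have h3 := ((h1.sub_const (f x)).sub
      (((hasDerivAt_id t).mul_const (⟪g x, d⟫)))).sub h2
    refine h3.congr_deriv ?_
    simp only [hF, inner_sub_left, inner_smul_left, RCLike.conj_to_real]
    ring
  have step2 : ∀ t ∈ Set.Icc (0:ℝ) 1, ‖ψ t‖ ≤ L / 6 * ‖d‖ ^ 3 * t ^ 3 := by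
    apply image_norm_le_of_norm_deriv_right_le_deriv_boundary
      (f := ψ) (f' := fun t => ⟪F t, d⟫) (a := 0) (b := 1)
      (B := fun t => L / 6 * ‖d‖ ^ 3 * t ^ 3) (B' := fun t => L / 2 * ‖d‖ ^ 3 * t ^ 2)
      (fun t _ => (hψ' t).continuousAt.continuousWithinAt)
      (fun t _ => (hψ' t).hasDerivWithinAt.mono (Set.Ici_subset_Ici.2 le_rfl))
      (by simp [hψ, hγ0])
      (fun t => by
        have : HasDerivAt (fun t : ℝ => L / 6 * ‖d‖ ^ 3 * t ^ 3) (L / 6 * ‖d‖^3 * (3 * t^2)) t := by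
          simpa using (hasDerivAt_pow 3 t).const_mul (L / 6 * ‖d‖ ^ 3)
        convert this using 1; ring)
    intro t ht
    have h1 : ‖(⟪F t, d⟫ : ℝ)‖ ≤ ‖F t‖ * ‖d‖ := norm_inner_le_norm _ _
    have h2 := step1 t (Set.Ico_subset_Icc_self ht)
    calc ‖(⟪F t, d⟫ : ℝ)‖ ≤ L / 2 * ‖d‖ ^ 2 * t ^ 2 * ‖d‖ :=
          h1.trans (mul_le_mul_of_nonneg_right h2 (norm_nonneg d))
      _ = L / 2 * ‖d‖ ^ 3 * t ^ 2 := by ring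
  have := step2 1 (by norm_num)
  simp only [hψ, hγ, one_smul, one_pow, one_mul, mul_one, Real.norm_eq_abs] at this
  exact this


lemma inner_toEuclideanCLM {n : ℕ} (A : Matrix (Fin n) (Fin n) ℝ)
    (u w : EuclideanSpace ℝ (Fin n)) :
    ⟪Matrix.toEuclideanCLM (𝕜 := ℝ) A u, w⟫ = Matrix.mulVec A u ⬝ᵥ (w : Fin n → ℝ) := by
  rw [PiLp.inner_apply]
  simp only [RCLike.inner_apply, starRingEnd_apply, star_trivial]
  have h := Matrix.ofLp_toEuclideanCLM (𝕜 := ℝ) A u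
  rw [dotProduct]
  apply Finset.sum_congr rfl
  intro i _
  have h2 := congrFun h i
  simp only [Matrix.toLin'_apply] at h2
  have h3 : (Matrix.toEuclideanCLM (𝕜 := ℝ) A) u i = (A *ᵥ (u : Fin n → ℝ)) i := h2
  rw [h3, mul_comm]

lemma hess_symm {n : ℕ} (f : EuclideanSpace ℝ (Fin n) → ℝ)
    (g : EuclideanSpace ℝ (Fin n) → EuclideanSpace ℝ (Fin n))
    (hessM : EuclideanSpace ℝ (Fin n) → Matrix (Fin n) (Fin n) ℝ)
    (hg : ∀ u, HasGradientAt f (g u) u)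
    (hhess : ∀ u, HasFDerivAt g (Matrix.toEuclideanCLM (𝕜 := ℝ) (hessM u)) u)
    (x : EuclideanSpace ℝ (Fin n)) : (hessM x).IsSymm := by
  have hfd : ∀ y, HasFDerivAt f
      ((innerSL ℝ : EuclideanSpace ℝ (Fin n) →L[ℝ] _) (g y)) y := by
    intro y
    have := (hg y).hasFDerivAt
    exact this
  have hfd2 : HasFDerivAt (fun y => (innerSL ℝ : EuclideanSpace ℝ (Fin n) →L[ℝ] _) (g y))
      (((innerSL ℝ : EuclideanSpace ℝ (Fin n) →L[ℝ] _)).comp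
        (Matrix.toEuclideanCLM (𝕜 := ℝ) (hessM x))) x :=
    ((innerSL ℝ : EuclideanSpace ℝ (Fin n) →L[ℝ] _).hasFDerivAt).comp x (hhess x)
  have hsymm := second_derivative_symmetric hfd hfd2
  rw [Matrix.IsSymm]
  ext i j
  have h := hsymm (EuclideanSpace.single j 1) (EuclideanSpace.single i 1)
  simp only [ContinuousLinearMap.comp_apply, innerSL_apply_apply] at h
  rw [inner_toEuclideanCLM, inner_toEuclideanCLM] at h
  simpa [Matrix.transpose_apply, dotProduct, EuclideanSpace.single_apply,
    Matrix.mulVec, Finset.mul_sum, mul_comm] using h.symm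


/-- Frobenius norm of a square real matrix. -/
noncomputable def frobNorm {n : ℕ} (A : Matrix (Fin n) (Fin n) ℝ) : ℝ :=
  Real.sqrt (∑ i, ∑ j, (A i j) ^ 2)

/-- Theorem 2.2 of the paper: under a conditioning (nonsingularity) assumption on the scaled
constraint map, a symmetric matrix `H` satisfying the enriched interpolating conditions is a
fully quadratic Hessian model, i.e. `‖H − ∇²f(x)‖_F = O(Δ_y)`. -/
theorem fully_quadratic_hessian_model
    {n p : ℕ} (f : EuclideanSpace ℝ (Fin n) → ℝ)
    (g : EuclideanSpace ℝ (Fin n) → EuclideanSpace ℝ (Fin n))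
    (hessM : EuclideanSpace ℝ (Fin n) → Matrix (Fin n) (Fin n) ℝ)
    (L : ℝ)
    (hg : ∀ u, HasGradientAt f (g u) u)
    (hhess : ∀ u, HasFDerivAt g (Matrix.toEuclideanCLM (𝕜 := ℝ) (hessM u)) u)
    (hLip : ∀ u v, ‖Matrix.toEuclideanCLM (𝕜 := ℝ) (hessM u) -
      Matrix.toEuclideanCLM (𝕜 := ℝ) (hessM v)‖ ≤ L * ‖u - v‖)
    (x v : EuclideanSpace ℝ (Fin n)) (y : Fin p → EuclideanSpace ℝ (Fin n))
    (Δy : ℝ) (hΔy : IsGreatest (Set.range fun ℓ => ‖y ℓ - x‖) Δy) (hΔypos : 0 < Δy)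
    (K : ℝ) (hK : 0 ≤ K)
    -- `‖A‖_F ≤ K ‖Φ̂(A)‖` for every symmetric matrix `A`, where `Φ̂` is the scaled
    -- constraint map and the norm on `ℝᵖ × ℝⁿ` is Euclidean:
    (hKbound : ∀ A : Matrix (Fin n) (Fin n) ℝ, A.IsSymm →
      frobNorm A ≤ K * Real.sqrt
        ((∑ ℓ : Fin p, ((1 / (2 * Δy ^ 2)) * ((y ℓ - x) ⬝ᵥ A.mulVec (y ℓ - x))) ^ 2) +
          ∑ i, (A.mulVec v i) ^ 2))
    (H : Matrix (Fin n) (Fin n) ℝ) (hHsymm : H.IsSymm)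
    (hinterp : ∀ ℓ : Fin p,
      f x + ⟪g x, y ℓ - x⟫ + (1 / 2) * ((y ℓ - x) ⬝ᵥ H.mulVec (y ℓ - x)) = f (y ℓ))
    (hhvp : H.mulVec v = (hessM x).mulVec v) :
    frobNorm (H - hessM x) ≤ K * Real.sqrt p * (L / 6) * Δy := by
  -- the range is nonempty, so p > 0
  obtain ⟨ℓ₀, hℓ₀⟩ := hΔy.1
  -- n > 0
  rcases Nat.eq_zero_or_pos n with hn | hn
  · subst hn
    exfalso
    have : ‖y ℓ₀ - x‖ = 0 := by
      have : y ℓ₀ - x = 0 := Subsingleton.elim _ _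
      simp [this]
    have h' : ‖y ℓ₀ - x‖ = Δy := hℓ₀
    rw [this] at h'; linarith
  -- L ≥ 0
  have hL : 0 ≤ L := by
    have h := hLip (EuclideanSpace.single ⟨0, hn⟩ (1:ℝ)) 0
    have hnorm : ‖EuclideanSpace.single (⟨0, hn⟩ : Fin n) (1:ℝ) - 0‖ = 1 := by
      simp [EuclideanSpace.norm_single]
    rw [hnorm, mul_one] at h
    exact le_trans (norm_nonneg _) h
  set E : Matrix (Fin n) (Fin n) ℝ := H - hessM x with hE
  have hEsymm : E.IsSymm := hHsymm.sub (hess_symm f g hessM hg hhess x)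
  have hEv : E.mulVec v = 0 := by
    simp [hE, Matrix.sub_mulVec, hhvp]
  -- key per-sample bound
  have key : ∀ ℓ : Fin p,
      |(1 / (2 * Δy ^ 2)) * ((y ℓ - x) ⬝ᵥ E.mulVec (y ℓ - x))| ≤ L / 6 * Δy := by
    intro ℓ
    set d : EuclideanSpace ℝ (Fin n) := y ℓ - x with hd
    have hdle : ‖d‖ ≤ Δy := hΔy.2 ⟨ℓ, rfl⟩
    have htay := taylor2 f g hessM L hg hhess hLip x d
    rw [show x + d = y ℓ by simp [hd]] at htay
    have hMd : ⟪Matrix.toEuclideanCLM (𝕜 := ℝ) (hessM x) d, d⟫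
        = (d : Fin n → ℝ) ⬝ᵥ (hessM x).mulVec d := by
      rw [inner_toEuclideanCLM, dotProduct_comm]
    have hHd : f (y ℓ) - f x - ⟪g x, d⟫ = (1/2) * ((d : Fin n → ℝ) ⬝ᵥ H.mulVec d) := by
      have := hinterp ℓ
      rw [← hd, ← WithLp.ofLp_sub (x := y ℓ) (y := x), ← hd] at this
      linarith
    have hsplit : f (y ℓ) - f x - ⟪g x, d⟫ -
        (1/2) * ⟪Matrix.toEuclideanCLM (𝕜 := ℝ) (hessM x) d, d⟫
        = (1/2) * ((d : Fin n → ℝ) ⬝ᵥ E.mulVec d) := by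
      rw [hHd, hMd, hE, Matrix.sub_mulVec, dotProduct_sub]
      ring
    rw [hsplit] at htay
    have hd3 : ‖d‖ ^ 3 ≤ Δy ^ 3 := by
      apply pow_le_pow_left₀ (norm_nonneg d) hdle
    have h1 : |(d : Fin n → ℝ) ⬝ᵥ E.mulVec d| ≤ L / 3 * Δy ^ 3 := by
      have : |(1:ℝ)/2 * ((d : Fin n → ℝ) ⬝ᵥ E.mulVec d)| ≤ L / 6 * Δy ^ 3 :=
        htay.trans (by nlinarith)
      rw [abs_mul] at this
      rw [abs_of_nonneg (by norm_num : (0:ℝ) ≤ (1:ℝ)/2)] at this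
      linarith [abs_nonneg ((d : Fin n → ℝ) ⬝ᵥ E.mulVec d)]
    rw [abs_mul, abs_of_nonneg (by positivity : (0:ℝ) ≤ 1 / (2 * Δy ^ 2))]
    calc 1 / (2 * Δy ^ 2) * |(d : Fin n → ℝ) ⬝ᵥ E.mulVec d|
        ≤ 1 / (2 * Δy ^ 2) * (L / 3 * Δy ^ 3) := by
          apply mul_le_mul_of_nonneg_left h1 (by positivity)
      _ = L / 6 * Δy := by field_simp; ring
  -- assemble
  have hmain := hKbound E hEsymm
  have hsum : (∑ ℓ : Fin p, ((1 / (2 * Δy ^ 2)) * ((y ℓ - x) ⬝ᵥ E.mulVec (y ℓ - x))) ^ 2)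
      + ∑ i, (E.mulVec v i) ^ 2 ≤ p * (L / 6 * Δy) ^ 2 := by
    have h2 : ∑ i, (E.mulVec v i) ^ 2 = 0 := by
      rw [hEv]; simp
    rw [h2, add_zero]
    calc (∑ ℓ : Fin p, ((1 / (2 * Δy ^ 2)) * ((y ℓ - x) ⬝ᵥ E.mulVec (y ℓ - x))) ^ 2)
        ≤ ∑ ℓ : Fin p, (L / 6 * Δy) ^ 2 := by
          apply Finset.sum_le_sum
          intro ℓ _
          have := key ℓ
          have habs := abs_nonneg ((1 / (2 * Δy ^ 2)) * ((y ℓ - x) ⬝ᵥ E.mulVec (y ℓ - x)))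
          nlinarith [sq_abs ((1 / (2 * Δy ^ 2)) * ((y ℓ - x) ⬝ᵥ E.mulVec (y ℓ - x)))]
      _ = p * (L / 6 * Δy) ^ 2 := by simp [Finset.sum_const]
  have hsqrt : Real.sqrt ((∑ ℓ : Fin p, ((1 / (2 * Δy ^ 2)) *
      ((y ℓ - x) ⬝ᵥ E.mulVec (y ℓ - x))) ^ 2) + ∑ i, (E.mulVec v i) ^ 2)
      ≤ Real.sqrt p * (L / 6 * Δy) := by
    have := Real.sqrt_le_sqrt hsum
    calc _ ≤ Real.sqrt (p * (L / 6 * Δy) ^ 2) := this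
      _ = Real.sqrt p * (L / 6 * Δy) := by
          rw [Real.sqrt_mul (by positivity), Real.sqrt_sq (by positivity)]
  calc frobNorm (H - hessM x) ≤ K * Real.sqrt ((∑ ℓ : Fin p, ((1 / (2 * Δy ^ 2)) *
        ((y ℓ - x) ⬝ᵥ E.mulVec (y ℓ - x))) ^ 2) + ∑ i, (E.mulVec v i) ^ 2) := hmain
    _ ≤ K * (Real.sqrt p * (L / 6 * Δy)) := mul_le_mul_of_nonneg_left hsqrt hK
    _ = K * Real.sqrt p * (L / 6) * Δy := by ring
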